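/- For every p ∈ [1,∞) there exists C_p ∈ (0,∞) such that for all ε ∈ (0,ε₀), all Δt = T/N with T ∈ (0,∞), N ∈ ℕ, and all n ≥ 0, one has (𝔼[|Δt m_{n+1}^{ε,Δt}/ε − Δβ_n|^p])^{1/p} ≤ C_p ε; in particular Δt m_{n+1}^{ε,Δt}/ε converges to the Brownian increment Δβ_n in L^p(Ω) as ε → 0, uniformly in Δt and n. -/

import Mathlib

open MeasureTheory ProbabilityTheory Real Set Filter

/-- Pathwise representation of the Ornstein--Uhlenbeck process
`m^ε(t) = e^{−t/ε²} m₀ + ε⁻¹ β(t) − ε⁻³ ∫₀ᵗ e^{−(t−s)/ε²} β(s) ds`. -/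
noncomputable def mOU {Ω : Type*} (β : ℝ → Ω → ℝ) (ε m0 t : ℝ) (ω : Ω) : ℝ :=
  Real.exp (-(t / ε ^ 2)) * m0 + ε⁻¹ * β t ω
    - (ε ^ 3)⁻¹ * ∫ s in (0:ℝ)..t, Real.exp (-((t - s) / ε ^ 2)) * β s ω

/-- `ζ^ε(t) = ε⁻¹ ∫₀ᵗ m^ε(s) ds`. -/
noncomputable def zetaOU {Ω : Type*} (β : ℝ → Ω → ℝ) (ε m0 t : ℝ) (ω : Ω) : ℝ :=
  ε⁻¹ * ∫ s in (0:ℝ)..t, mOU β ε m0 s ω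

open scoped ENNReal NNReal

lemma aux_integrable_gauss {p : ℝ} (hp : 1 ≤ p) :
    Integrable (fun x => |x| ^ p) (gaussianReal 0 1) := by
  have hp0 : (0:ℝ) ≤ p := le_trans zero_le_one hp
  rw [gaussianReal_of_var_ne_zero 0 one_ne_zero,
    integrable_withDensity_iff (measurable_gaussianPDF 0 1)
      (Filter.Eventually.of_forall fun x => ENNReal.ofReal_lt_top)]
  have hbound : ∀ x : ℝ, |x| ^ p * (gaussianPDF 0 1 x).toReal
      ≤ ((Real.sqrt (2 * π))⁻¹ * Real.exp (p ^ 2)) * Real.exp (-(1/4 : ℝ) * x ^ 2) := by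
    intro x
    rw [gaussianPDF, ENNReal.toReal_ofReal (gaussianPDFReal_nonneg 0 1 x), gaussianPDFReal]
    have h1 : |x| ^ p ≤ Real.exp (p * |x|) := by
      have hxe : |x| ≤ Real.exp |x| := by
        have := Real.add_one_le_exp |x|
        linarith
      calc |x| ^ p ≤ Real.exp |x| ^ p := Real.rpow_le_rpow (abs_nonneg x) hxe hp0
        _ = Real.exp (p * |x|) := by
            rw [Real.rpow_def_of_pos (Real.exp_pos _), Real.log_exp, mul_comm]
    have h2 : Real.exp (p * |x|) * Real.exp (- (x - 0)^2 / (2 * ((1:ℝ≥0):ℝ)))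
        ≤ Real.exp (p ^ 2) * Real.exp (-(1/4 : ℝ) * x ^ 2) := by
      rw [← Real.exp_add, ← Real.exp_add]
      apply Real.exp_le_exp.mpr
      have hx2 : (x - 0)^2 = |x|^2 := by rw [sub_zero, sq_abs]
      rw [hx2]
      push_cast
      nlinarith [sq_nonneg (p - |x|/2), abs_nonneg x]
    have hs : (0:ℝ) ≤ (Real.sqrt (2 * π * ((1:ℝ≥0):ℝ)))⁻¹ := by positivity
    calc |x| ^ p * ((Real.sqrt (2 * π * ((1:ℝ≥0):ℝ)))⁻¹ * Real.exp (- (x - 0)^2 / (2 * ((1:ℝ≥0):ℝ))))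
        ≤ Real.exp (p * |x|) * ((Real.sqrt (2 * π * ((1:ℝ≥0):ℝ)))⁻¹ * Real.exp (- (x - 0)^2 / (2 * ((1:ℝ≥0):ℝ)))) := by
          apply mul_le_mul_of_nonneg_right h1
          positivity
      _ = (Real.sqrt (2 * π * ((1:ℝ≥0):ℝ)))⁻¹ * (Real.exp (p * |x|) * Real.exp (- (x - 0)^2 / (2 * ((1:ℝ≥0):ℝ)))) := by ring
      _ ≤ (Real.sqrt (2 * π * ((1:ℝ≥0):ℝ)))⁻¹ * (Real.exp (p ^ 2) * Real.exp (-(1/4 : ℝ) * x ^ 2)) :=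
          mul_le_mul_of_nonneg_left h2 hs
      _ = ((Real.sqrt (2 * π * ((1:ℝ≥0):ℝ)))⁻¹ * Real.exp (p ^ 2)) * Real.exp (-(1/4 : ℝ) * x ^ 2) := by ring
      _ = ((Real.sqrt (2 * π))⁻¹ * Real.exp (p ^ 2)) * Real.exp (-(1/4 : ℝ) * x ^ 2) := by norm_num
  refine Integrable.mono' ((integrable_exp_neg_mul_sq (by norm_num : (0:ℝ) < 1/4)).const_mul ((Real.sqrt (2 * π))⁻¹ * Real.exp (p ^ 2)))
    ?_ (Filter.Eventually.of_forall fun x => ?_)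
  · exact ((measurable_id.abs.pow_const p).mul
      ((measurable_gaussianPDF 0 1).ennreal_toReal)).aestronglyMeasurable
  · rw [Real.norm_eq_abs, abs_of_nonneg
      (mul_nonneg (Real.rpow_nonneg (abs_nonneg x) p) ENNReal.toReal_nonneg)]
    exact hbound x

lemma gauss_eq_map (v : ℝ≥0) :
    gaussianReal 0 v = (gaussianReal 0 1).map (fun x => Real.sqrt v * x) := by
  rw [gaussianReal_map_const_mul]
  congr 1
  · simp
  · ext
    simp [Real.sq_sqrt v.2]

lemma gauss_memLp {p : ℝ} (hp : 1 ≤ p) (v : ℝ≥0) :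
    MemLp (fun x : ℝ => x) (ENNReal.ofReal p) (gaussianReal 0 v) := by
  have hp0 : (0:ℝ) < p := lt_of_lt_of_le one_pos hp
  have hq0 : ENNReal.ofReal p ≠ 0 := (ENNReal.ofReal_pos.mpr hp0).ne'
  have hqt : ENNReal.ofReal p ≠ ∞ := ENNReal.ofReal_ne_top
  have h1 : MemLp (fun x : ℝ => x) (ENNReal.ofReal p) (gaussianReal 0 1) := by
    refine (memLp_norm_rpow_iff (q := ENNReal.ofReal p)
      measurable_id.aestronglyMeasurable hq0 hqt).mp ?_
    rw [ENNReal.div_self hq0 hqt, memLp_one_iff_integrable]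
    simpa [ENNReal.toReal_ofReal hp0.le, Real.norm_eq_abs] using aux_integrable_gauss hp
  rw [gauss_eq_map v]
  refine (memLp_map_measure_iff measurable_id.aestronglyMeasurable
    (measurable_const_mul _).aemeasurable).mpr ?_
  exact h1.const_mul (Real.sqrt v)

lemma gauss_eLpNorm' {p : ℝ} (v : ℝ≥0) :
    eLpNorm (fun x : ℝ => x) (ENNReal.ofReal p) (gaussianReal 0 v)
      = ENNReal.ofReal (Real.sqrt v)
        * eLpNorm (fun x : ℝ => x) (ENNReal.ofReal p) (gaussianReal 0 1) := by
  rw [gauss_eq_map v, eLpNorm_map_measure (g := fun x : ℝ => x) measurable_id.aestronglyMeasurable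
    (measurable_const_mul _).aemeasurable]
  calc eLpNorm ((fun x : ℝ => x) ∘ fun x => Real.sqrt v * x) (ENNReal.ofReal p) (gaussianReal 0 1)
      = eLpNorm ((Real.sqrt v : ℝ) • (fun x : ℝ => x)) (ENNReal.ofReal p) (gaussianReal 0 1) := rfl
    _ = ENNReal.ofReal (Real.sqrt v)
        * eLpNorm (fun x : ℝ => x) (ENNReal.ofReal p) (gaussianReal 0 1) := by
        rw [eLpNorm_const_smul, Real.enorm_eq_ofReal (Real.sqrt_nonneg _)]

/-- **Lemma (the rescaled discrete increments approximate the Brownian increments).**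
For every `p ∈ [1,∞)` there is `C_p ∈ (0,∞)` such that
`(𝔼[|Δt m_{n+1}^{ε,Δt}/ε − Δβ_n|^p])^{1/p} ≤ C_p ε`, uniformly in `Δt = T/N` and `n`. -/
theorem discrete_increment_approximates_brownian_increment
    {Ω : Type*} [MeasurableSpace Ω] (P : Measure Ω) [IsProbabilityMeasure P]
    (β : ℝ → Ω → ℝ)
    (hβmeas : ∀ t, Measurable (β t))
    (hβ0 : ∀ ω, β 0 ω = 0)
    (hβcont : ∀ᵐ ω ∂P, Continuous fun t => β t ω)
    (hβgauss : ∀ s t : ℝ, 0 ≤ s → s ≤ t →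
      Measure.map (fun ω => β t ω - β s ω) P = gaussianReal 0 (Real.toNNReal (t - s)))
    (hβindep : ∀ (n : ℕ) (u : ℕ → ℝ), Monotone u → 0 ≤ u 0 →
      iIndepFun
        (fun (i : Fin n) (ω : Ω) => β (u (i.1 + 1)) ω - β (u i.1) ω) P)
    (ε₀ : ℝ) (hε₀ : 0 < ε₀)
    (m0 : ℝ → ℝ) (M0 : ℝ) (hm0 : ∀ ε ∈ Ioo (0:ℝ) ε₀, |m0 ε| ≤ M0)
    (p : ℝ) (hp : 1 ≤ p) :
    ∃ Cp : ℝ, 0 < Cp ∧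
      ∀ ε ∈ Ioo (0:ℝ) ε₀, ∀ T : ℝ, 0 < T → ∀ N : ℕ, 1 ≤ N →
      ∀ mD : ℕ → Ω → ℝ,
        (∀ ω, mD 0 ω = m0 ε) →
        (∀ (n : ℕ) ω, mD (n + 1) ω =
          (mD n ω + (β (((n : ℝ) + 1) * (T / N)) ω - β ((n : ℝ) * (T / N)) ω) / ε)
            / (1 + (T / N) / ε ^ 2)) →
        ∀ n : ℕ,
          (∫ ω, |(T / N) * mD (n + 1) ω / ε
              - (β (((n : ℝ) + 1) * (T / N)) ω - β ((n : ℝ) * (T / N)) ω)| ^ p ∂P) ^ (1 / p)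
            ≤ Cp * ε := by
  have hp0 : (0:ℝ) < p := lt_of_lt_of_le one_pos hp
  set q : ℝ≥0∞ := ENNReal.ofReal p with hqdef
  have hq0 : q ≠ 0 := (ENNReal.ofReal_pos.mpr hp0).ne'
  have hqt : q ≠ ∞ := ENNReal.ofReal_ne_top
  have hqR : q.toReal = p := ENNReal.toReal_ofReal hp0.le
  have hq1 : (1:ℝ≥0∞) ≤ q := by
    rw [hqdef, ← ENNReal.ofReal_one]; exact ENNReal.ofReal_le_ofReal hp
  obtain ⟨g0, hg0def⟩ : ∃ x : ℝ, x = (eLpNorm (fun x : ℝ => x) q (gaussianReal 0 1)).toReal :=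
    ⟨_, rfl⟩
  have hg0fin : eLpNorm (fun x : ℝ => x) q (gaussianReal 0 1) = ENNReal.ofReal g0 := by
    rw [hg0def, ENNReal.ofReal_toReal (gauss_memLp hp 1).2.ne]
  have hg0 : 0 ≤ g0 := hg0def ▸ ENNReal.toReal_nonneg
  have hM0 : 0 ≤ M0 := le_trans (abs_nonneg _) (hm0 (ε₀/2) ⟨by linarith, by linarith⟩)
  refine ⟨M0 + g0 + 1, by linarith, ?_⟩
  rintro ε ⟨hε, hεε₀⟩ T hT N hN mD h0 hrec n
  have hNpos : (0:ℝ) < N := by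
    have : 0 < N := lt_of_lt_of_le Nat.zero_lt_one hN
    exact_mod_cast this
  obtain ⟨Δ, hΔdef⟩ : ∃ x : ℝ, x = T / N := ⟨_, rfl⟩
  rw [← hΔdef] at hrec ⊢
  have hΔ : 0 < Δ := hΔdef ▸ div_pos hT hNpos
  obtain ⟨D, hDdef⟩ : ∃ x : ℝ, x = Δ / ε ^ 2 := ⟨_, rfl⟩
  rw [← hDdef] at hrec
  have hD : 0 < D := hDdef ▸ div_pos hΔ (by positivity)
  have hΔD : Δ = D * ε ^ 2 := by
    rw [hDdef, div_mul_cancel₀ _ (pow_ne_zero 2 hε.ne')]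
  have hsD : Real.sqrt D * Real.sqrt D = D := Real.mul_self_sqrt hD.le
  have hsDpos : 0 < Real.sqrt D := Real.sqrt_pos.mpr hD
  have hsΔ : Real.sqrt Δ = ε * Real.sqrt D := by
    rw [hΔD, mul_comm D, Real.sqrt_mul (by positivity), Real.sqrt_sq hε.le]
  have h1D : (0:ℝ) < 1 + D := by linarith
  -- the Brownian increments
  have hBmeas : ∀ k : ℕ, Measurable (fun ω => β (((k:ℝ)+1) * Δ) ω - β ((k:ℝ)*Δ) ω) :=
    fun k => (hβmeas _).sub (hβmeas _)
  have hlaw : ∀ k : ℕ, Measure.map (fun ω => β (((k:ℝ)+1)*Δ) ω - β ((k:ℝ)*Δ) ω) P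
      = gaussianReal 0 (Real.toNNReal Δ) := by
    intro k
    have h1 : (0:ℝ) ≤ (k:ℝ)*Δ := mul_nonneg (Nat.cast_nonneg k) hΔ.le
    have h2 : (k:ℝ)*Δ ≤ ((k:ℝ)+1)*Δ := by nlinarith
    rw [hβgauss ((k:ℝ)*Δ) (((k:ℝ)+1)*Δ) h1 h2, show ((k:ℝ)+1)*Δ - (k:ℝ)*Δ = Δ by ring]
  have hBmem : ∀ k : ℕ, MemLp (fun ω => β (((k:ℝ)+1)*Δ) ω - β ((k:ℝ)*Δ) ω) q P := by
    intro k
    have h := gauss_memLp hp (Real.toNNReal Δ)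
    rw [← hlaw k] at h
    exact (memLp_map_measure_iff measurable_id.aestronglyMeasurable
      (hBmeas k).aemeasurable).mp h
  have hBnorm : ∀ k : ℕ, eLpNorm (fun ω => β (((k:ℝ)+1)*Δ) ω - β ((k:ℝ)*Δ) ω) q P
      = ENNReal.ofReal (Real.sqrt Δ * g0) := by
    intro k
    have h2 : eLpNorm (fun ω => β (((k:ℝ)+1)*Δ) ω - β ((k:ℝ)*Δ) ω) q P
        = eLpNorm (fun x : ℝ => x) q (gaussianReal 0 (Real.toNNReal Δ)) := by
      rw [← hlaw k, eLpNorm_map_measure (g := fun x : ℝ => x)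
        measurable_id.aestronglyMeasurable (hBmeas k).aemeasurable]
      rfl
    rw [h2, gauss_eLpNorm', hg0fin, ← ENNReal.ofReal_mul (Real.sqrt_nonneg _),
      Real.coe_toNNReal Δ hΔ.le]
  -- representation of the recursion
  have hrepr : ∀ k : ℕ, mD (k+1)
      = (1 + D)⁻¹ • (mD k + fun ω => ε⁻¹ * (β (((k:ℝ)+1)*Δ) ω - β ((k:ℝ)*Δ) ω)) := by
    intro k; funext ω
    show mD (k+1) ω
      = (1 + D)⁻¹ * (mD k ω + ε⁻¹ * (β (((k:ℝ)+1)*Δ) ω - β ((k:ℝ)*Δ) ω))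
    rw [hrec k ω]; ring
  have hmem : ∀ k : ℕ, MemLp (mD k) q P := by
    intro k; induction k with
    | zero => rw [show mD 0 = fun _ => m0 ε from funext h0]; exact memLp_const _
    | succ k ih =>
      rw [hrepr k]
      exact (ih.add ((hBmem k).const_mul ε⁻¹)).const_smul _
  obtain ⟨Bd, hBddef⟩ : ∃ x : ℝ, x = M0 + g0 / Real.sqrt D := ⟨_, rfl⟩
  have hBd0 : 0 ≤ Bd := hBddef ▸ add_nonneg hM0 (div_nonneg hg0 hsDpos.le)
  have h4 : D * (g0 / Real.sqrt D) = Real.sqrt D * g0 := by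
    rw [mul_comm, div_mul_eq_mul_div, mul_div_assoc, Real.div_sqrt, mul_comm]
  have key : ∀ k : ℕ, eLpNorm (mD k) q P ≤ ENNReal.ofReal Bd := by
    intro k; induction k with
    | zero =>
      rw [show mD 0 = fun _ => m0 ε from funext h0,
        eLpNorm_const _ hq0 (IsProbabilityMeasure.ne_zero P), measure_univ,
        ENNReal.one_rpow, mul_one, Real.enorm_eq_ofReal_abs]
      refine ENNReal.ofReal_le_ofReal (le_trans (hm0 ε ⟨hε, hεε₀⟩) ?_)
      rw [hBddef]
      linarith [div_nonneg hg0 hsDpos.le]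
    | succ k ih =>
      rw [hrepr k, eLpNorm_const_smul, Real.enorm_eq_ofReal_abs,
        abs_of_pos (inv_pos.mpr h1D)]
      have hscal : eLpNorm (fun ω => ε⁻¹ * (β (((k:ℝ)+1)*Δ) ω - β ((k:ℝ)*Δ) ω)) q P
          = ENNReal.ofReal (ε⁻¹ * (Real.sqrt Δ * g0)) := by
        rw [show (fun ω => ε⁻¹ * (β (((k:ℝ)+1)*Δ) ω - β ((k:ℝ)*Δ) ω))
            = ε⁻¹ • (fun ω => β (((k:ℝ)+1)*Δ) ω - β ((k:ℝ)*Δ) ω) from rfl,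
          eLpNorm_const_smul, Real.enorm_eq_ofReal_abs, abs_of_pos (inv_pos.mpr hε),
          hBnorm k, ← ENNReal.ofReal_mul (inv_pos.mpr hε).le]
      have htri := eLpNorm_add_le (hmem k).1
        ((hBmem k).const_mul ε⁻¹).1 hq1
      refine le_trans (mul_le_mul_right
        (le_trans htri (add_le_add ih (le_of_eq hscal))) _) ?_
      rw [← ENNReal.ofReal_add hBd0
          (mul_nonneg (inv_nonneg.mpr hε.le) (mul_nonneg (Real.sqrt_nonneg _) hg0)),
        ← ENNReal.ofReal_mul (inv_nonneg.mpr h1D.le)]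
      refine ENNReal.ofReal_le_ofReal ?_
      rw [hsΔ, hBddef]
      have h3 : ε⁻¹ * (ε * Real.sqrt D * g0) = Real.sqrt D * g0 := by
        rw [← mul_assoc, ← mul_assoc, inv_mul_cancel₀ hε.ne', one_mul]
      rw [h3]
      calc (1+D)⁻¹ * ((M0 + g0 / Real.sqrt D) + Real.sqrt D * g0)
          ≤ (1+D)⁻¹ * ((1+D) * (M0 + g0 / Real.sqrt D)) := by
            refine mul_le_mul_of_nonneg_left ?_ (inv_nonneg.mpr h1D.le)
            nlinarith [h4, mul_nonneg hD.le hM0]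
        _ = M0 + g0 / Real.sqrt D := by rw [inv_mul_cancel_left₀ h1D.ne']
  -- final estimate
  have hXrepr : (fun ω => Δ * mD (n+1) ω / ε - (β (((n:ℝ)+1)*Δ) ω - β ((n:ℝ)*Δ) ω))
      = (1+D)⁻¹ • ((fun ω => (ε*D) * mD n ω)
          - fun ω => β (((n:ℝ)+1)*Δ) ω - β ((n:ℝ)*Δ) ω) := by
    funext ω
    show Δ * mD (n+1) ω / ε - (β (((n:ℝ)+1)*Δ) ω - β ((n:ℝ)*Δ) ω)
      = (1+D)⁻¹ * ((ε*D) * mD n ω - (β (((n:ℝ)+1)*Δ) ω - β ((n:ℝ)*Δ) ω))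
    rw [hrec n ω, hΔD]
    field_simp
    ring
  have hXmem : MemLp (fun ω => Δ * mD (n+1) ω / ε
      - (β (((n:ℝ)+1)*Δ) ω - β ((n:ℝ)*Δ) ω)) q P := by
    rw [hXrepr]
    exact (((hmem n).const_mul (ε*D)).sub (hBmem n)).const_smul _
  have hXnorm : eLpNorm (fun ω => Δ * mD (n+1) ω / ε
      - (β (((n:ℝ)+1)*Δ) ω - β ((n:ℝ)*Δ) ω)) q P
      ≤ ENNReal.ofReal ((M0 + g0 + 1) * ε) := by
    rw [hXrepr, eLpNorm_const_smul, Real.enorm_eq_ofReal_abs,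
      abs_of_pos (inv_pos.mpr h1D)]
    have hf : eLpNorm (fun ω => (ε*D) * mD n ω) q P ≤ ENNReal.ofReal ((ε*D) * Bd) := by
      rw [show (fun ω => (ε*D) * mD n ω) = (ε*D) • mD n from rfl, eLpNorm_const_smul,
        Real.enorm_eq_ofReal_abs, abs_of_pos (mul_pos hε hD)]
      calc ENNReal.ofReal (ε*D) * eLpNorm (mD n) q P
          ≤ ENNReal.ofReal (ε*D) * ENNReal.ofReal Bd := mul_le_mul_right (key n) _
        _ = ENNReal.ofReal ((ε*D) * Bd) :=
          (ENNReal.ofReal_mul (mul_nonneg hε.le hD.le)).symm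
    have htri := eLpNorm_sub_le ((hmem n).const_mul (ε*D)).1 (hBmem n).1 hq1
    refine le_trans (mul_le_mul_right
      (le_trans htri (add_le_add hf (le_of_eq (hBnorm n)))) _) ?_
    rw [← ENNReal.ofReal_add (mul_nonneg (mul_nonneg hε.le hD.le) hBd0)
        (mul_nonneg (Real.sqrt_nonneg _) hg0),
      ← ENNReal.ofReal_mul (inv_nonneg.mpr h1D.le)]
    refine ENNReal.ofReal_le_ofReal ?_
    rw [hsΔ, hBddef]
    have hnum : (ε*D) * (M0 + g0 / Real.sqrt D) + ε * Real.sqrt D * g0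
        ≤ (1+D) * ((M0 + g0 + 1) * ε) := by
      nlinarith [h4, hsD, hM0, hg0, hε.le, hD.le, sq_nonneg (Real.sqrt D - 1),
        mul_nonneg hε.le hg0, mul_nonneg hε.le hM0,
        mul_nonneg (mul_nonneg hε.le hD.le) hM0,
        mul_nonneg (mul_nonneg hε.le hD.le) hg0,
        mul_nonneg hε.le (mul_nonneg hg0 (sq_nonneg (Real.sqrt D - 1)))]
    calc (1+D)⁻¹ * ((ε*D) * (M0 + g0 / Real.sqrt D) + ε * Real.sqrt D * g0)
        ≤ (1+D)⁻¹ * ((1+D) * ((M0 + g0 + 1) * ε)) :=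
          mul_le_mul_of_nonneg_left hnum (inv_nonneg.mpr h1D.le)
      _ = (M0 + g0 + 1) * ε := by rw [inv_mul_cancel_left₀ h1D.ne']
  rw [hXmem.eLpNorm_eq_integral_rpow_norm hq0 hqt, hqR] at hXnorm
  have hfin := (ENNReal.ofReal_le_ofReal_iff
    (mul_nonneg (by linarith) hε.le)).mp hXnorm
  simpa [Real.norm_eq_abs, one_div] using hfin
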